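/- Cancellation for the Chow weight structure: assuming the Tate twist −⟨1⟩ is a fully faithful weight-exact endofunctor of DM^{eff}_R, one has DM^{eff}_{R, w≤0} ∩ Obj(DM^{eff}_R⟨1⟩) = DM^{eff}_{R, w≤0}⟨1⟩ and DM^{eff}_{R, w≥0} ∩ Obj(DM^{eff}_R⟨1⟩) = DM^{eff}_{R, w≥0}⟨1⟩; consequently the analogous equality holds for hearts. -/

import Mathlib

open CategoryTheory CategoryTheory.Limits CategoryTheory.Pretriangulated

universe v u u'

variable (C : Type u) [Category.{v} C] [HasZeroObject C] [HasShift C ℤ]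
  [Preadditive C] [∀ n : ℤ, (shiftFunctor C n).Additive] [Pretriangulated C]

/-- A weight structure on a triangulated category `C`:
a pair of Karoubi-closed classes `le = C_{w≤0}` and `ge = C_{w≥0}` satisfying
semi-invariance with respect to translations, orthogonality and the existence of
weight decompositions. -/
structure WeightStructure where
  /-- the class `C_{w≤0}` -/
  le : Set C
  /-- the class `C_{w≥0}` -/
  ge : Set C
  /-- `C_{w≤0}` is Karoubi-closed (contains all retracts of its elements) -/
  le_retract : ∀ ⦃M N : C⦄, N ∈ le → ∀ (i : M ⟶ N) (r : N ⟶ M), i ≫ r = 𝟙 M → M ∈ le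
  /-- `C_{w≥0}` is Karoubi-closed -/
  ge_retract : ∀ ⦃M N : C⦄, N ∈ ge → ∀ (i : M ⟶ N) (r : N ⟶ M), i ≫ r = 𝟙 M → M ∈ ge
  /-- `C_{w≤0} ⊆ C_{w≤0}[1]`, i.e. `M ∈ C_{w≤0} → M[-1] ∈ C_{w≤0}` -/
  le_shift : ∀ ⦃M : C⦄, M ∈ le → M⟦(-1 : ℤ)⟧ ∈ le
  /-- `C_{w≥0}[1] ⊆ C_{w≥0}` -/
  ge_shift : ∀ ⦃M : C⦄, M ∈ ge → M⟦(1 : ℤ)⟧ ∈ ge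
  /-- orthogonality: `C_{w≤0} ⊥ C_{w≥0}[1]` -/
  orth : ∀ ⦃M N : C⦄, M ∈ le → N ∈ ge → ∀ f : M ⟶ N⟦(1 : ℤ)⟧, f = 0
  /-- weight decompositions -/
  decomp : ∀ M : C, ∃ (L R : C) (f : L ⟶ M) (g : M ⟶ R) (h : R ⟶ L⟦(1 : ℤ)⟧),
    Triangle.mk f g h ∈ (distTriang C) ∧ L ∈ le ∧ R⟦(-1 : ℤ)⟧ ∈ ge

namespace WeightStructure

variable {C}

lemma mem_le_of_iso (w : WeightStructure C) {M N : C} (e : M ≅ N) (h : N ∈ w.le) :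
    M ∈ w.le :=
  w.le_retract h e.hom e.inv e.hom_inv_id

lemma mem_ge_of_iso (w : WeightStructure C) {M N : C} (e : M ≅ N) (h : N ∈ w.ge) :
    M ∈ w.ge :=
  w.ge_retract h e.hom e.inv e.hom_inv_id

/-- Any morphism from an object of weights `≤ -1` to an object of weights `≥ 0` vanishes. -/
lemma orth' (w : WeightStructure C) {A B : C} (hA : A ∈ w.le) (hB : B ∈ w.ge)
    (f : A⟦(-1 : ℤ)⟧ ⟶ B) : f = 0 := by
  have h0 : (-1 : ℤ) + 1 = 0 := by norm_num
  have hz := w.orth hA hB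
    ((shiftFunctorCompIsoId C (-1 : ℤ) (1 : ℤ) h0).inv.app A ≫ (shiftFunctor C (1 : ℤ)).map f)
  have h1 : (shiftFunctor C (1 : ℤ)).map f = 0 := by
    rw [← cancel_epi ((shiftFunctorCompIsoId C (-1 : ℤ) (1 : ℤ) h0).inv.app A), hz, comp_zero]
  exact (shiftFunctor C (1 : ℤ)).map_injective (by rw [h1, Functor.map_zero])

/-- If `T` is fully faithful, triangulated, weight-exact and `T Y` is of weights `≤ 0`,
then so is `Y`. -/
lemma key_le (w : WeightStructure C) (T : C ⥤ C) [T.Full] [T.Faithful] [T.CommShift ℤ]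
    [T.IsTriangulated] (hge : ∀ X ∈ w.ge, T.obj X ∈ w.ge) {X Y : C}
    (hX : X ∈ w.le) (e : T.obj Y ≅ X) : Y ∈ w.le := by
  obtain ⟨L, R, f, g, h, hdist, hL, hR⟩ := w.decomp Y
  have hTY : T.obj Y ∈ w.le := w.mem_le_of_iso e hX
  -- `(T R)⟦-1⟧` has weights `≥ 0`
  have hTR : (T.obj R)⟦(-1 : ℤ)⟧ ∈ w.ge :=
    w.mem_ge_of_iso ((T.commShiftIso (-1 : ℤ)).symm.app R) (hge _ hR)
  have h0 : (-1 : ℤ) + 1 = 0 := by norm_num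
  -- the map `T Y ⟶ T R` vanishes by orthogonality
  have hg0 : T.map g = 0 := by
    have hz := w.orth hTY hTR
      (T.map g ≫ (shiftFunctorCompIsoId C (-1 : ℤ) (1 : ℤ) h0).inv.app (T.obj R))
    rw [← cancel_mono ((shiftFunctorCompIsoId C (-1 : ℤ) (1 : ℤ) h0).inv.app (T.obj R)), hz,
      zero_comp]
  -- hence `T Y` is a retract of `T L`
  obtain ⟨r, hr⟩ : ∃ r : T.obj Y ⟶ T.obj L, 𝟙 (T.obj Y) = r ≫ T.map f :=
    Triangle.coyoneda_exact₂ _ (T.map_distinguished _ hdist)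
    (𝟙 (T.obj Y)) (by exact (Category.id_comp _).trans hg0)
  refine w.le_retract hL (T.preimage r) f (T.map_injective ?_)
  rw [Functor.map_comp, Functor.map_preimage, CategoryTheory.Functor.map_id]
  exact hr.symm

/-- If `T` is fully faithful, triangulated, weight-exact and `T Y` is of weights `≥ 0`,
then so is `Y`. -/
lemma key_ge (w : WeightStructure C) (T : C ⥤ C) [T.Full] [T.Faithful] [T.CommShift ℤ]
    [T.IsTriangulated] (hle : ∀ X ∈ w.le, T.obj X ∈ w.le) {X Y : C}
    (hX : X ∈ w.ge) (e : T.obj Y ≅ X) : Y ∈ w.ge := by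
  obtain ⟨L, R, f, g, h, hdist, hL, hR⟩ := w.decomp (Y⟦(1 : ℤ)⟧)
  have hTY : T.obj Y ∈ w.ge := w.mem_ge_of_iso e hX
  have h0 : (1 : ℤ) + (-1 : ℤ) = 0 := by norm_num
  -- the target `T (Y⟦1⟧⟦-1⟧)` has weights `≥ 0`
  have htarget : T.obj ((Y⟦(1 : ℤ)⟧)⟦(-1 : ℤ)⟧) ∈ w.ge :=
    w.mem_ge_of_iso (T.mapIso ((shiftFunctorCompIsoId C (1 : ℤ) (-1 : ℤ) h0).app Y)) hTY
  -- the image under `T` of the shifted triangle `L⟦-1⟧ ⟶ Y⟦1⟧⟦-1⟧ ⟶ R⟦-1⟧` is distinguished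
  have hTrdist' : T.mapTriangle.obj ((Triangle.shiftFunctor C (-1 : ℤ)).obj
      (Triangle.mk f g h)) ∈ distTriang C :=
    T.map_distinguished _ (Triangle.shift_distinguished _ hdist (-1 : ℤ))
  -- its first morphism vanishes by orthogonality
  have hmor0 : (T.mapTriangle.obj ((Triangle.shiftFunctor C (-1 : ℤ)).obj
      (Triangle.mk f g h))).mor₁ = 0 := by
    exact (cancel_epi ((T.commShiftIso (-1 : ℤ)).inv.app L)).1
      ((w.orth' (hle _ hL) htarget _).trans comp_zero.symm)
  -- hence `T (Y⟦1⟧⟦-1⟧)` is a retract of `T (R⟦-1⟧)`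
  obtain ⟨s, hs⟩ : ∃ s : T.obj (R⟦(-1 : ℤ)⟧) ⟶ T.obj ((Y⟦(1 : ℤ)⟧)⟦(-1 : ℤ)⟧),
      𝟙 _ = T.map ((-1 : ℤ).negOnePow • (shiftFunctor C (-1 : ℤ)).map g) ≫ s :=
    Triangle.yoneda_exact₂ _ hTrdist'
    (𝟙 (T.obj ((Y⟦(1 : ℤ)⟧)⟦(-1 : ℤ)⟧))) (by exact (Category.comp_id _).trans hmor0)
  have hret : ((-1 : ℤ).negOnePow • (shiftFunctor C (-1 : ℤ)).map g) ≫ T.preimage s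
      = 𝟙 ((Y⟦(1 : ℤ)⟧)⟦(-1 : ℤ)⟧) := by
    refine T.map_injective ?_
    rw [Functor.map_comp, Functor.map_preimage, CategoryTheory.Functor.map_id]
    exact hs.symm
  have hY' : (Y⟦(1 : ℤ)⟧)⟦(-1 : ℤ)⟧ ∈ w.ge :=
    w.ge_retract hR _ (T.preimage s) hret
  exact w.mem_ge_of_iso ((shiftFunctorCompIsoId C (1 : ℤ) (-1 : ℤ) h0).symm.app Y) hY'

end WeightStructure

/-- Cancellation for the Chow weight structure: if `T` (the Tate twist `−⟨1⟩`) is a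
fully faithful weight-exact exact endofunctor of `C` (= `DM^{eff}_R` with its Chow
weight structure `w`), then
`C_{w≤0} ∩ Obj(C⟨1⟩) = C_{w≤0}⟨1⟩`, `C_{w≥0} ∩ Obj(C⟨1⟩) = C_{w≥0}⟨1⟩`, and the
analogous equality holds for the hearts; here `C⟨1⟩` is the essential image of `T`. -/
theorem cancellation_for_weight_structure
    (w : WeightStructure C)
    (T : C ⥤ C) [T.Full] [T.Faithful] [T.CommShift ℤ] [T.IsTriangulated]
    -- `T` is weight-exact:
    (hle : ∀ X ∈ w.le, T.obj X ∈ w.le) (hge : ∀ X ∈ w.ge, T.obj X ∈ w.ge) :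
    (∀ X : C, (X ∈ w.le ∧ T.essImage X) ↔ ∃ Y ∈ w.le, Nonempty (T.obj Y ≅ X)) ∧
    (∀ X : C, (X ∈ w.ge ∧ T.essImage X) ↔ ∃ Y ∈ w.ge, Nonempty (T.obj Y ≅ X)) ∧
    (∀ X : C, (X ∈ w.le ∩ w.ge ∧ T.essImage X) ↔
      ∃ Y ∈ w.le ∩ w.ge, Nonempty (T.obj Y ≅ X)) := by
  refine ⟨fun X => ⟨?_, ?_⟩, fun X => ⟨?_, ?_⟩, fun X => ⟨?_, ?_⟩⟩
  · rintro ⟨hX, ⟨Y, ⟨eY⟩⟩⟩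
    exact ⟨Y, w.key_le T hge hX eY, ⟨eY⟩⟩
  · rintro ⟨Y, hY, ⟨eY⟩⟩
    exact ⟨w.mem_le_of_iso eY.symm (hle _ hY), ⟨Y, ⟨eY⟩⟩⟩
  · rintro ⟨hX, ⟨Y, ⟨eY⟩⟩⟩
    exact ⟨Y, w.key_ge T hle hX eY, ⟨eY⟩⟩
  · rintro ⟨Y, hY, ⟨eY⟩⟩
    exact ⟨w.mem_ge_of_iso eY.symm (hge _ hY), ⟨Y, ⟨eY⟩⟩⟩
  · rintro ⟨⟨hX₁, hX₂⟩, ⟨Y, ⟨eY⟩⟩⟩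
    exact ⟨Y, ⟨w.key_le T hge hX₁ eY, w.key_ge T hle hX₂ eY⟩, ⟨eY⟩⟩
  · rintro ⟨Y, ⟨hY₁, hY₂⟩, ⟨eY⟩⟩
    exact ⟨⟨w.mem_le_of_iso eY.symm (hle _ hY₁), w.mem_ge_of_iso eY.symm (hge _ hY₂)⟩,
      ⟨Y, ⟨eY⟩⟩⟩
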